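/- arXiv:2406.17712 — 2 statements merged into one kernel-verified Lean document; each statement's English description precedes it below -/
import Mathlib

section
/- Let L be a commutative unital quantale, let (P, e) be an L-dcpo, and let x ∈ P. If there exists a directed L-subset D of P such that D ≤ k(x) (pointwise) and ⊔D = x, then k(x) is directed and ⊔k(x) = x. -/
universe u

/-- A commutative unital quantale structure on a complete lattice `L`. -/
structure CommQuantale (L : Type u) [CompleteLattice L] : Type u where
  mul : L → L → L
  mul_comm : ∀ a b, mul a b = mul b a
  mul_assoc : ∀ a b c, mul (mul a b) c = mul a (mul b c)
  unit : L
  mul_unit : ∀ a, mul a unit = a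
  mul_sSup : ∀ (a : L) (S : Set L), mul a (sSup S) = ⨆ s ∈ S, mul a s

namespace CommQuantale

variable {L : Type u} [CompleteLattice L]

/-- The residuation `b → c`, the right adjoint of `⊗`. -/
def res (Q : CommQuantale L) (b c : L) : L := sSup {a | Q.mul a b ≤ c}

/-- `sub(A,B) = ⋀ₓ (A x → B x)` for `L`-subsets. -/
def subL (Q : CommQuantale L) {X : Type u} (A B : X → L) : L :=
  ⨅ x, Q.res (A x) (B x)

open Classical in
/-- The characteristic function `u_x`. -/
noncomputable def ux (Q : CommQuantale L) {X : Type u} (x : X) : X → L :=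
  fun y => if y = x then Q.unit else ⊥

/-- `e` is an `L`-order on `P`. -/
def IsLOrder (Q : CommQuantale L) {P : Type u} (e : P → P → L) : Prop :=
  (∀ x, Q.unit ≤ e x x) ∧
  (∀ x y z, Q.mul (e x y) (e y z) ≤ e x z) ∧
  (∀ x y, Q.unit ≤ e x y → Q.unit ≤ e y x → x = y)

/-- `D` is a directed `L`-subset of `(P, e)`. -/
def IsDirectedL (Q : CommQuantale L) {P : Type u} (e : P → P → L) (D : P → L) : Prop :=
  (Q.unit ≤ ⨆ x, D x) ∧
  (∀ x y, Q.mul (D x) (D y) ≤ ⨆ z, Q.mul (Q.mul (D z) (e x z)) (e y z))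

/-- `x₀` is the supremum `⊔A` of the `L`-subset `A`. -/
def IsSupL (Q : CommQuantale L) {P : Type u} (e : P → P → L) (A : P → L) (x₀ : P) : Prop :=
  ∀ y, e x₀ y = Q.subL A (fun x => e x y)

/-- `(P, e)` is an `L`-dcpo: every directed `L`-subset has a supremum. -/
def IsDcpoL (Q : CommQuantale L) {P : Type u} (e : P → P → L) : Prop :=
  ∀ D : P → L, Q.IsDirectedL e D → ∃ s, Q.IsSupL e D s

/-- `⇓x : P → L`, i.e. `⇓x(y) = ⋀_{D directed} (e(x, ⊔D) → ⋁_d D(d) ⊗ e(y,d))`. -/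
def wayBelow (Q : CommQuantale L) {P : Type u} (e : P → P → L) (x : P) : P → L := fun y =>
  ⨅ (D : P → L) (_ : Q.IsDirectedL e D) (s : P) (_ : Q.IsSupL e D s),
    Q.res (e x s) (⨆ d, Q.mul (D d) (e y d))

/-- `(P, e)` is a continuous `L`-dcpo. -/
def IsContinuousLDcpo (Q : CommQuantale L) {P : Type u} (e : P → P → L) : Prop :=
  Q.IsLOrder e ∧ Q.IsDcpoL e ∧
  ∀ x, Q.IsDirectedL e (Q.wayBelow e x) ∧ Q.IsSupL e (Q.wayBelow e x) x

open Classical in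
/-- `k(x)(y) = e(y,x)` if `y` is compact (i.e. `u ≤ ⇓y(y)`), else `0`. -/
noncomputable def kfun (Q : CommQuantale L) {P : Type u} (e : P → P → L) (x : P) : P → L :=
  fun y => if Q.unit ≤ Q.wayBelow e y y then e y x else ⊥

/-- `(P, e)` is an algebraic `L`-dcpo. -/
noncomputable def IsAlgebraicLDcpo (Q : CommQuantale L) {P : Type u} (e : P → P → L) : Prop :=
  Q.IsLOrder e ∧ Q.IsDcpoL e ∧
  ∀ x, Q.IsDirectedL e (Q.kfun e x) ∧ Q.IsSupL e (Q.kfun e x) x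

/-- `cl` is a generalized `L`-closure operator: (GC1) and (GC2). -/
def IsGenClosure (Q : CommQuantale L) {X : Type u} (cl : (X → L) → (X → L)) : Prop :=
  (∀ A B, Q.subL A B ≤ Q.subL (cl A) (cl B)) ∧
  (∀ A, cl (cl A) ≤ cl A)

/-- Interpolation conditions (IT1)-(IT3). -/
noncomputable def IsInterpolative (Q : CommQuantale L) {X : Type u}
    (cl : (X → L) → (X → L)) : Prop :=
  (∀ x, Q.unit ≤ ⨆ t, cl (Q.ux x) t) ∧
  (∀ x y, cl (Q.ux x) y ≤ ⨆ t, Q.mul (cl (Q.ux x) t) (cl (Q.ux t) y)) ∧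
  (∀ x a b, Q.mul (cl (Q.ux x) a) (cl (Q.ux x) b) ≤
    ⨆ t, Q.mul (Q.mul (cl (Q.ux x) t) (cl (Q.ux t) a)) (cl (Q.ux t) b))

/-- `U` is a directed closed set: (DC1)-(DC4). -/
noncomputable def IsDirClosed (Q : CommQuantale L) {X : Type u}
    (cl : (X → L) → (X → L)) (U : X → L) : Prop :=
  (Q.unit ≤ ⨆ x, U x) ∧
  (∀ x, U x ≤ Q.subL (cl (Q.ux x)) U) ∧
  (∀ x, U x ≤ ⨆ y, Q.mul (U y) (cl (Q.ux y) x)) ∧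
  (∀ x y, Q.mul (U x) (U y) ≤
    ⨆ z, Q.mul (Q.mul (U z) (cl (Q.ux z) x)) (cl (Q.ux z) y))

end CommQuantale

section Helpers

variable {L : Type u} [CompleteLattice L] (Q : CommQuantale L)

lemma myUnitMul (a : L) : Q.mul Q.unit a = a := by
  rw [Q.mul_comm, Q.mul_unit]

lemma myMulMonoRight {b c : L} (a : L) (h : b ≤ c) : Q.mul a b ≤ Q.mul a c := by
  have h1 : Q.mul a c = ⨆ s ∈ ({b, c} : Set L), Q.mul a s := by
    rw [← Q.mul_sSup]
    congr 1
    rw [sSup_pair, sup_eq_right.mpr h]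
  rw [h1]
  exact le_iSup₂ (f := fun s (_ : s ∈ ({b, c} : Set L)) => Q.mul a s) b (by simp)

lemma myMulMono {a b c d : L} (h1 : a ≤ c) (h2 : b ≤ d) :
    Q.mul a b ≤ Q.mul c d := by
  calc Q.mul a b ≤ Q.mul a d := myMulMonoRight Q a h2
    _ = Q.mul d a := Q.mul_comm _ _
    _ ≤ Q.mul d c := myMulMonoRight Q d h1
    _ = Q.mul c d := Q.mul_comm _ _

lemma myMulIsup {ι : Sort*} (a : L) (f : ι → L) :
    Q.mul a (⨆ i, f i) = ⨆ i, Q.mul a (f i) := by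
  rw [iSup, Q.mul_sSup, iSup_range]

lemma myIsupMul {ι : Sort*} (a : L) (f : ι → L) :
    Q.mul (⨆ i, f i) a = ⨆ i, Q.mul (f i) a := by
  rw [Q.mul_comm, myMulIsup]
  exact iSup_congr fun i => Q.mul_comm _ _

lemma myMulBot (a : L) : Q.mul a ⊥ = ⊥ := by
  have := Q.mul_sSup a ∅
  simpa using this

lemma myLeRes {a b c : L} : a ≤ Q.res b c ↔ Q.mul a b ≤ c := by
  constructor
  · intro h
    calc Q.mul a b ≤ Q.mul (Q.res b c) b := myMulMono Q h le_rfl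
      _ = Q.mul b (sSup {a | Q.mul a b ≤ c}) := Q.mul_comm _ _
      _ = ⨆ s ∈ {a | Q.mul a b ≤ c}, Q.mul b s := Q.mul_sSup _ _
      _ ≤ c := by
          apply iSup₂_le
          intro s hs
          rw [Q.mul_comm]
          exact hs
  · intro h
    exact le_sSup h

lemma myResAnti {b b' c : L} (h : b ≤ b') : Q.res b' c ≤ Q.res b c := by
  apply sSup_le
  intro a ha
  apply le_sSup
  exact le_trans (myMulMono Q le_rfl h) ha

lemma myMul4 (a b c d : L) :
    Q.mul (Q.mul a b) (Q.mul c d) = Q.mul (Q.mul a c) (Q.mul b d) := by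
  haveI : Std.Associative Q.mul := ⟨Q.mul_assoc⟩
  haveI : Std.Commutative Q.mul := ⟨Q.mul_comm⟩
  ac_rfl

lemma myRearrange (p q r s t : L) :
    Q.mul (Q.mul (Q.mul p q) r) (Q.mul s t) =
    Q.mul (Q.mul p (Q.mul s q)) (Q.mul t r) := by
  haveI : Std.Associative Q.mul := ⟨Q.mul_assoc⟩
  haveI : Std.Commutative Q.mul := ⟨Q.mul_comm⟩
  ac_rfl

end Helpers

open CommQuantale in
/-- If in an L-dcpo there is a directed L-subset D with D ≤ k(x) and ⊔D = x,
then k(x) is directed and ⊔k(x) = x. -/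
theorem stmt12 {L P : Type u} [CompleteLattice L] (Q : CommQuantale L)
    (e : P → P → L) (hord : Q.IsLOrder e) (hdcpo : Q.IsDcpoL e) (x : P)
    (D : P → L) (hD : Q.IsDirectedL e D)
    (hle : ∀ y, D y ≤ Q.kfun e x y) (hsup : Q.IsSupL e D x) :
    Q.IsDirectedL e (Q.kfun e x) ∧ Q.IsSupL e (Q.kfun e x) x := by
  classical
  set K := Q.kfun e x with hK
  have hKle : ∀ z, K z ≤ e z x := by
    intro z
    rw [hK]
    unfold CommQuantale.kfun
    split
    · exact le_rfl
    · exact bot_le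
  have hDK : ∀ z, D z ≤ K z := hle
  -- compactness consequence
  have hcompact : ∀ a, Q.unit ≤ Q.wayBelow e a a →
      e a x ≤ ⨆ d, Q.mul (D d) (e a d) := by
    intro a ha
    have h1 : Q.unit ≤ Q.res (e a x) (⨆ d, Q.mul (D d) (e a d)) := by
      refine le_trans ha ?_
      exact iInf_le_of_le D (iInf_le_of_le hD (iInf_le_of_le x (iInf_le _ hsup)))
    have h2 := (myLeRes Q).mp h1
    rwa [myUnitMul] at h2
  constructor
  · constructor
    · calc Q.unit ≤ ⨆ z, D z := hD.1
        _ ≤ ⨆ z, K z := iSup_mono hDK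
    · intro a b
      by_cases ha : Q.unit ≤ Q.wayBelow e a a
      · by_cases hb : Q.unit ≤ Q.wayBelow e b b
        · have hKa : K a = e a x := if_pos ha
          have hKb : K b = e b x := if_pos hb
          calc Q.mul (K a) (K b) = Q.mul (e a x) (e b x) := by rw [hKa, hKb]
            _ ≤ Q.mul (⨆ d, Q.mul (D d) (e a d)) (⨆ d', Q.mul (D d') (e b d')) :=
                myMulMono Q (hcompact a ha) (hcompact b hb)
            _ = ⨆ d, ⨆ d', Q.mul (Q.mul (D d) (e a d)) (Q.mul (D d') (e b d')) := by
                rw [myIsupMul]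
                exact iSup_congr fun d => myMulIsup Q _ _
            _ ≤ ⨆ z, Q.mul (Q.mul (K z) (e a z)) (e b z) := by
                apply iSup_le; intro d
                apply iSup_le; intro d'
                calc Q.mul (Q.mul (D d) (e a d)) (Q.mul (D d') (e b d'))
                    = Q.mul (Q.mul (D d) (D d')) (Q.mul (e a d) (e b d')) :=
                      myMul4 Q _ _ _ _
                  _ ≤ Q.mul (⨆ z, Q.mul (Q.mul (D z) (e d z)) (e d' z))
                        (Q.mul (e a d) (e b d')) :=
                      myMulMono Q (hD.2 d d') le_rfl
                  _ = ⨆ z, Q.mul (Q.mul (Q.mul (D z) (e d z)) (e d' z))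
                        (Q.mul (e a d) (e b d')) := myIsupMul Q _ _
                  _ ≤ ⨆ z, Q.mul (Q.mul (K z) (e a z)) (e b z) := by
                      apply iSup_mono; intro z
                      rw [myRearrange]
                      refine myMulMono Q (myMulMono Q (hDK z) ?_) ?_
                      · exact hord.2.1 a d z
                      · exact hord.2.1 b d' z
        · have hKb : K b = ⊥ := if_neg hb
          rw [hKb, myMulBot]
          exact bot_le
      · have hKa : K a = ⊥ := if_neg ha
        rw [hKa, Q.mul_comm, myMulBot]
        exact bot_le
  · intro y
    apply le_antisymm
    · apply le_iInf
      intro z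
      rw [myLeRes]
      calc Q.mul (e x y) (K z) = Q.mul (K z) (e x y) := Q.mul_comm _ _
        _ ≤ Q.mul (e z x) (e x y) := myMulMono Q (hKle z) le_rfl
        _ ≤ e z y := hord.2.1 z x y
    · calc Q.subL (K ·) (e · y) ≤ Q.subL (D ·) (e · y) :=
          iInf_mono fun z => myResAnti Q (hDK z)
        _ = e x y := (hsup y).symm
end

section
/- Let L be a commutative unital quantale and let (X, ⟨·⟩) be an L-closure space. Then the L-ordered set (𝔠(X), sub) of directed closed sets of X is an algebraic L-dcpo. -/
universe u

namespace CommQuantale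

variable {L : Type u} [CompleteLattice L] (Q : CommQuantale L)

def stdAssoc : Std.Associative Q.mul := ⟨Q.mul_assoc⟩
def stdComm : Std.Commutative Q.mul := ⟨Q.mul_comm⟩
attribute [local instance] stdAssoc stdComm

example (a b c d : L) : Q.mul (Q.mul a b) (Q.mul c d) = Q.mul (Q.mul a c) (Q.mul b d) := by ac_rfl

theorem unit_mul' (a : L) : Q.mul Q.unit a = a := by rw [Q.mul_comm]; exact Q.mul_unit a

theorem mul_iSup' {ι : Sort*} (a : L) (f : ι → L) :
    Q.mul a (⨆ i, f i) = ⨆ i, Q.mul a (f i) := by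
  rw [iSup, Q.mul_sSup, iSup_range]

theorem mul_bot' (a : L) : Q.mul a ⊥ = ⊥ := by
  have : (⊥ : L) = sSup ∅ := by simp
  rw [this, Q.mul_sSup]; simp

theorem bot_mul' (a : L) : Q.mul ⊥ a = ⊥ := by rw [Q.mul_comm]; exact Q.mul_bot' a

theorem mul_le_mul_right' {b b' : L} (a : L) (h : b ≤ b') : Q.mul a b ≤ Q.mul a b' := by
  have h1 : sSup {b, b'} = b' := by rw [sSup_pair]; exact sup_eq_right.2 h
  have h2 := Q.mul_sSup a {b, b'}
  rw [h1] at h2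
  rw [h2]
  exact le_biSup _ (Set.mem_insert _ _)

theorem mul_le_mul' {a a' b b' : L} (h1 : a ≤ a') (h2 : b ≤ b') :
    Q.mul a b ≤ Q.mul a' b' := by
  refine le_trans (Q.mul_le_mul_right' a h2) ?_
  rw [Q.mul_comm a b', Q.mul_comm a' b']
  exact Q.mul_le_mul_right' b' h1

theorem mul_res_le' (b c : L) : Q.mul (Q.res b c) b ≤ c := by
  rw [res, Q.mul_comm, Q.mul_sSup]
  refine iSup₂_le fun s hs => ?_
  rw [Q.mul_comm]; exact hs

theorem le_res_iff' {a b c : L} : a ≤ Q.res b c ↔ Q.mul a b ≤ c := by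
  constructor
  · intro h
    exact le_trans (Q.mul_le_mul' h le_rfl) (Q.mul_res_le' b c)
  · intro h; exact le_sSup h

theorem res_mono_right' {c c' : L} (b : L) (h : c ≤ c') : Q.res b c ≤ Q.res b c' :=
  sSup_le_sSup fun a ha => le_trans ha h

theorem res_anti_left' {b b' : L} (h : b ≤ b') (c : L) : Q.res b' c ≤ Q.res b c :=
  sSup_le fun a ha => Q.le_res_iff'.2 (le_trans (Q.mul_le_mul_right' a h) ha)

theorem subL_mul_le' {X : Type u} (A B : X → L) (x : X) :
    Q.mul (Q.subL A B) (A x) ≤ B x :=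
  Q.le_res_iff'.1 (iInf_le _ x)

theorem le_subL_iff' {X : Type u} {A B : X → L} {c : L} :
    c ≤ Q.subL A B ↔ ∀ x, Q.mul c (A x) ≤ B x := by
  simp only [subL, le_iInf_iff, Q.le_res_iff']

theorem unit_le_subL_self' {X : Type u} (A : X → L) : Q.unit ≤ Q.subL A A :=
  Q.le_subL_iff'.2 fun x => (Q.unit_mul' (A x)).le

theorem subL_trans' {X : Type u} (A B C : X → L) :
    Q.mul (Q.subL A B) (Q.subL B C) ≤ Q.subL A C := by
  rw [Q.le_subL_iff']
  intro x
  have h : Q.mul (Q.mul (Q.subL A B) (Q.subL B C)) (A x)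
      = Q.mul (Q.subL B C) (Q.mul (Q.subL A B) (A x)) := by ac_rfl
  rw [h]
  exact le_trans (Q.mul_le_mul_right' _ (Q.subL_mul_le' A B x)) (Q.subL_mul_le' B C x)

theorem unit_le_subL_iff' {X : Type u} {A B : X → L} :
    Q.unit ≤ Q.subL A B ↔ ∀ x, A x ≤ B x := by
  rw [Q.le_subL_iff']
  constructor
  · intro h x; have := h x; rwa [Q.unit_mul'] at this
  · intro h x; rw [Q.unit_mul']; exact h x

theorem subL_mono_right' {X : Type u} {B B' : X → L} (A : X → L) (h : ∀ x, B x ≤ B' x) :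
    Q.subL A B ≤ Q.subL A B' :=
  iInf_mono fun x => Q.res_mono_right' _ (h x)

theorem subL_anti_left' {X : Type u} {A A' : X → L} (h : ∀ x, A x ≤ A' x) (B : X → L) :
    Q.subL A' B ≤ Q.subL A B :=
  iInf_mono fun x => Q.res_anti_left' (h x) _


section Stmt13Aux
variable {L X : Type u} [CompleteLattice L]

theorem le_mul_left'' (Q : CommQuantale L) {a b : L} (h : Q.unit ≤ a) : b ≤ Q.mul a b := by
  calc b = Q.mul Q.unit b := (Q.unit_mul' b).symm
    _ ≤ Q.mul a b := Q.mul_le_mul' h le_rfl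

theorem le_mul_right'' (Q : CommQuantale L) {a b : L} (h : Q.unit ≤ a) : b ≤ Q.mul b a := by
  rw [Q.mul_comm]; exact le_mul_left'' Q h

variable (Q : CommQuantale L) (cl : (X → L) → (X → L))

/-- The subtype of directed closed sets. -/
abbrev DCset := {U : X → L // Q.IsDirClosed cl U}

/-- The order on directed closed sets. -/
abbrev eD : DCset Q cl → DCset Q cl → L := fun U V => Q.subL U.1 V.1

theorem unit_le_cl_ux (hlc : ∀ A : X → L, A ≤ cl A) (x : X) :
    Q.unit ≤ cl (Q.ux x) x := by
  have h := hlc (Q.ux x) x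
  simpa [CommQuantale.ux] using h

theorem le_subL_ux (A : X → L) (x : X) : A x ≤ Q.subL (Q.ux x) A := by
  refine le_iInf fun t => ?_
  rw [Q.le_res_iff']
  by_cases h : t = x
  · subst h; simp [CommQuantale.ux, Q.mul_unit]
  · simp [CommQuantale.ux, h, Q.mul_bot']

theorem cl_ux_le_subL (hgc : Q.IsGenClosure cl) (x y : X) :
    cl (Q.ux x) y ≤ Q.subL (cl (Q.ux y)) (cl (Q.ux x)) :=
  le_trans (le_subL_ux Q (cl (Q.ux x)) y)
    (le_trans (hgc.1 (Q.ux y) (cl (Q.ux x)))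
      (Q.subL_mono_right' _ fun t => hgc.2 (Q.ux x) t))

theorem dc2_apply {U : X → L} (hU : Q.IsDirClosed cl U) (x t : X) :
    Q.mul (U x) (cl (Q.ux x) t) ≤ U t :=
  le_trans (Q.mul_le_mul' (hU.2.1 x) le_rfl) (Q.subL_mul_le' _ _ t)

theorem cl_ux_mem (hgc : Q.IsGenClosure cl) (hlc : ∀ A : X → L, A ≤ cl A) (x : X) :
    Q.IsDirClosed cl (cl (Q.ux x)) := by
  refine ⟨le_trans (unit_le_cl_ux Q cl hlc x) (le_iSup _ x),
    fun y => cl_ux_le_subL Q cl hgc x y, fun t => ?_, fun a b => ?_⟩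
  · refine le_trans ?_ (le_iSup (fun y => Q.mul (cl (Q.ux x) y) (cl (Q.ux y) t)) x)
    exact le_mul_left'' Q (unit_le_cl_ux Q cl hlc x)
  · refine le_trans ?_
      (le_iSup (fun z => Q.mul (Q.mul (cl (Q.ux x) z) (cl (Q.ux z) a)) (cl (Q.ux z) b)) x)
    exact Q.mul_le_mul' (le_mul_left'' Q (unit_le_cl_ux Q cl hlc x)) le_rfl

/-- The principal compact element `⟨u_x⟩`. -/
noncomputable def Cx (hgc : Q.IsGenClosure cl) (hlc : ∀ A : X → L, A ≤ cl A) (x : X) :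
    DCset Q cl := ⟨cl (Q.ux x), cl_ux_mem Q cl hgc hlc x⟩

theorem subL_cl_ux_le (hlc : ∀ A : X → L, A ≤ cl A) (A : X → L) (x : X) :
    Q.subL (cl (Q.ux x)) A ≤ A x :=
  le_trans (le_mul_right'' Q (unit_le_cl_ux Q cl hlc x)) (Q.subL_mul_le' _ A x)

theorem U_eq_iSup (hlc : ∀ A : X → L, A ≤ cl A) {U : X → L}
    (hU : Q.IsDirClosed cl U) (t : X) :
    U t = ⨆ x, Q.mul (U x) (cl (Q.ux x) t) := by
  apply le_antisymm
  · exact le_trans (le_mul_right'' Q (unit_le_cl_ux Q cl hlc t))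
      (le_iSup (fun x => Q.mul (U x) (cl (Q.ux x) t)) t)
  · exact iSup_le fun x => dc2_apply Q cl hU x t

/-- Pointwise join of a weighted family of directed closed sets. -/
noncomputable def SU (𝒟 : DCset Q cl → L) : X → L := fun t => ⨆ V, Q.mul (𝒟 V) (V.1 t)

theorem subL_SU (𝒟 : DCset Q cl → L) (B : X → L) :
    Q.subL (SU Q cl 𝒟) B = ⨅ W : DCset Q cl, Q.res (𝒟 W) (Q.subL W.1 B) := by
  have key : ∀ c : L, c ≤ Q.subL (SU Q cl 𝒟) B ↔
      c ≤ ⨅ W : DCset Q cl, Q.res (𝒟 W) (Q.subL W.1 B) := by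
    intro c
    rw [Q.le_subL_iff', le_iInf_iff]
    constructor
    · intro h W
      rw [Q.le_res_iff', Q.le_subL_iff']
      intro t
      rw [Q.mul_assoc]
      refine le_trans (Q.mul_le_mul_right' c ?_) (h t)
      exact le_iSup (fun V => Q.mul (𝒟 V) (V.1 t)) W
    · intro h t
      show Q.mul c (⨆ V, Q.mul (𝒟 V) (V.1 t)) ≤ B t
      rw [Q.mul_iSup']
      refine iSup_le fun V => ?_
      rw [← Q.mul_assoc]
      have h1 := h V
      rw [Q.le_res_iff'] at h1
      exact le_trans (Q.mul_le_mul' h1 le_rfl) (Q.subL_mul_le' V.1 B t)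
  exact le_antisymm ((key _).1 le_rfl) ((key _).2 le_rfl)

theorem SU_mem (𝒟 : DCset Q cl → L) (h𝒟 : Q.IsDirectedL (eD Q cl) 𝒟) :
    Q.IsDirClosed cl (SU Q cl 𝒟) := by
  obtain ⟨hd1, hd2⟩ := h𝒟
  refine ⟨?_, fun x => ?_, fun x => ?_, fun x y => ?_⟩
  · refine le_trans hd1 (iSup_le fun V => ?_)
    calc 𝒟 V ≤ Q.mul (𝒟 V) (⨆ x, V.1 x) := le_mul_right'' Q V.2.1
      _ = ⨆ x, Q.mul (𝒟 V) (V.1 x) := Q.mul_iSup' _ _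
      _ ≤ ⨆ x, SU Q cl 𝒟 x :=
        iSup_mono fun x => le_iSup (fun W => Q.mul (𝒟 W) (W.1 x)) V
  · show (⨆ V, Q.mul (𝒟 V) (V.1 x)) ≤ _
    refine iSup_le fun V => ?_
    rw [Q.le_subL_iff']
    intro t
    rw [Q.mul_assoc]
    refine le_trans (Q.mul_le_mul_right' _ (dc2_apply Q cl V.2 x t)) ?_
    exact le_iSup (fun W => Q.mul (𝒟 W) (W.1 t)) V
  · show (⨆ V, Q.mul (𝒟 V) (V.1 x)) ≤ _
    refine iSup_le fun V => ?_
    refine le_trans (Q.mul_le_mul_right' _ (V.2.2.2.1 x)) ?_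
    rw [Q.mul_iSup']
    refine iSup_le fun y => ?_
    rw [← Q.mul_assoc]
    refine le_trans (Q.mul_le_mul' (le_iSup (fun W => Q.mul (𝒟 W) (W.1 y)) V) le_rfl) ?_
    exact le_iSup (fun y => Q.mul (SU Q cl 𝒟 y) (cl (Q.ux y) x)) y
  · show Q.mul (⨆ V, Q.mul (𝒟 V) (V.1 x)) (⨆ W, Q.mul (𝒟 W) (W.1 y)) ≤ _
    rw [Q.mul_iSup']
    refine iSup_le fun W => ?_
    rw [Q.mul_comm, Q.mul_iSup']
    refine iSup_le fun V => ?_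
    have e1 : Q.mul (Q.mul (𝒟 W) (W.1 y)) (Q.mul (𝒟 V) (V.1 x))
        = Q.mul (Q.mul (𝒟 V) (𝒟 W)) (Q.mul (V.1 x) (W.1 y)) := by ac_rfl
    rw [e1]
    refine le_trans (Q.mul_le_mul' (hd2 V W) le_rfl) ?_
    rw [Q.mul_comm, Q.mul_iSup']
    refine iSup_le fun Z => ?_
    have e2 : Q.mul (Q.mul (V.1 x) (W.1 y))
        (Q.mul (Q.mul (𝒟 Z) (Q.subL V.1 Z.1)) (Q.subL W.1 Z.1))
        = Q.mul (𝒟 Z) (Q.mul (Q.mul (Q.subL V.1 Z.1) (V.1 x))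
            (Q.mul (Q.subL W.1 Z.1) (W.1 y))) := by ac_rfl
    rw [e2]
    refine le_trans (Q.mul_le_mul_right' _
      (Q.mul_le_mul' (Q.subL_mul_le' V.1 Z.1 x) (Q.subL_mul_le' W.1 Z.1 y))) ?_
    refine le_trans (Q.mul_le_mul_right' _ (Z.2.2.2.2 x y)) ?_
    rw [Q.mul_iSup']
    refine iSup_le fun z => ?_
    have e3 : Q.mul (𝒟 Z) (Q.mul (Q.mul (Z.1 z) (cl (Q.ux z) x)) (cl (Q.ux z) y))
        = Q.mul (Q.mul (Q.mul (𝒟 Z) (Z.1 z)) (cl (Q.ux z) x)) (cl (Q.ux z) y) := by ac_rfl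
    rw [e3]
    refine le_trans (Q.mul_le_mul' (Q.mul_le_mul'
      (le_iSup (fun W' => Q.mul (𝒟 W') (W'.1 z)) Z) le_rfl) le_rfl) ?_
    exact le_iSup (fun z => Q.mul (Q.mul (SU Q cl 𝒟 z) (cl (Q.ux z) x)) (cl (Q.ux z) y)) z

theorem isSupL_SU (𝒟 : DCset Q cl → L) (s : DCset Q cl) (hs : s.1 = SU Q cl 𝒟) :
    Q.IsSupL (eD Q cl) 𝒟 s := by
  intro y
  show Q.subL s.1 y.1 = _
  rw [hs, subL_SU]
  rfl

theorem dcpoL : Q.IsDcpoL (eD Q cl) := fun 𝒟 h𝒟 =>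
  ⟨⟨SU Q cl 𝒟, SU_mem Q cl 𝒟 h𝒟⟩, isSupL_SU Q cl 𝒟 _ rfl⟩

theorem sup_eq (𝒟 : DCset Q cl → L) (h𝒟 : Q.IsDirectedL (eD Q cl) 𝒟)
    (s : DCset Q cl) (hs : Q.IsSupL (eD Q cl) 𝒟 s) : s.1 = SU Q cl 𝒟 := by
  set s₀ : DCset Q cl := ⟨SU Q cl 𝒟, SU_mem Q cl 𝒟 h𝒟⟩ with hs₀
  have h0 : Q.IsSupL (eD Q cl) 𝒟 s₀ := isSupL_SU Q cl 𝒟 s₀ rfl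
  have e1 : Q.unit ≤ eD Q cl s s₀ := by
    rw [hs s₀, ← h0 s₀]; exact Q.unit_le_subL_self' s₀.1
  have e2 : Q.unit ≤ eD Q cl s₀ s := by
    rw [h0 s, ← hs s]; exact Q.unit_le_subL_self' s.1
  funext t
  exact le_antisymm (Q.unit_le_subL_iff'.1 e1 t) (Q.unit_le_subL_iff'.1 e2 t)

theorem compact_Cx (hgc : Q.IsGenClosure cl) (hlc : ∀ A : X → L, A ≤ cl A) (x : X) :
    Q.unit ≤ Q.wayBelow (eD Q cl) (Cx Q cl hgc hlc x) (Cx Q cl hgc hlc x) := by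
  simp only [CommQuantale.wayBelow]
  refine le_iInf fun 𝒟 => le_iInf fun h𝒟 => le_iInf fun s => le_iInf fun hs => ?_
  rw [Q.le_res_iff', Q.unit_mul']
  have hseq := sup_eq Q cl 𝒟 h𝒟 s hs
  show Q.subL (cl (Q.ux x)) s.1 ≤ _
  rw [hseq]
  refine le_trans (subL_cl_ux_le Q cl hlc (SU Q cl 𝒟) x) ?_
  show (⨆ V, Q.mul (𝒟 V) (V.1 x)) ≤ _
  exact iSup_mono fun V => Q.mul_le_mul_right' _ (V.2.2.1 x)

open Classical in
/-- The weighted family of point closures below `U`. -/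
noncomputable def EU (hgc : Q.IsGenClosure cl) (hlc : ∀ A : X → L, A ≤ cl A)
    (U : X → L) : DCset Q cl → L :=
  fun V => ⨆ x, if V = Cx Q cl hgc hlc x then U x else ⊥

open Classical in
theorem le_EU_Cx (hgc : Q.IsGenClosure cl) (hlc : ∀ A : X → L, A ≤ cl A)
    (U : X → L) (x : X) : U x ≤ EU Q cl hgc hlc U (Cx Q cl hgc hlc x) := by
  refine le_trans ?_ (le_iSup
    (fun y => if Cx Q cl hgc hlc x = Cx Q cl hgc hlc y then U y else ⊥) x)
  rw [if_pos rfl]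

open Classical in
theorem EU_mul_iSup (hgc : Q.IsGenClosure cl) (hlc : ∀ A : X → L, A ≤ cl A)
    (U : X → L) (g : DCset Q cl → L) :
    (⨆ V, Q.mul (EU Q cl hgc hlc U V) (g V))
      = ⨆ x, Q.mul (U x) (g (Cx Q cl hgc hlc x)) := by
  apply le_antisymm
  · refine iSup_le fun V => ?_
    rw [EU, Q.mul_comm, Q.mul_iSup']
    refine iSup_le fun x => ?_
    by_cases h : V = Cx Q cl hgc hlc x
    · subst h
      rw [if_pos rfl, Q.mul_comm]
      exact le_iSup (fun x => Q.mul (U x) (g (Cx Q cl hgc hlc x))) x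
    · rw [if_neg h, Q.mul_bot']
      exact bot_le
  · refine iSup_le fun x => ?_
    refine le_trans ?_ (le_iSup (fun V => Q.mul (EU Q cl hgc hlc U V) (g V))
      (Cx Q cl hgc hlc x))
    exact Q.mul_le_mul' (le_EU_Cx Q cl hgc hlc U x) le_rfl

theorem SU_EU (hgc : Q.IsGenClosure cl) (hlc : ∀ A : X → L, A ≤ cl A)
    {U : X → L} (hU : Q.IsDirClosed cl U) :
    SU Q cl (EU Q cl hgc hlc U) = U := by
  funext t
  show (⨆ V, Q.mul (EU Q cl hgc hlc U V) (V.1 t)) = U t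
  rw [EU_mul_iSup Q cl hgc hlc U (fun V => V.1 t)]
  exact (U_eq_iSup Q cl hlc hU t).symm

open Classical in
theorem EU_directed (hgc : Q.IsGenClosure cl) (hlc : ∀ A : X → L, A ≤ cl A)
    {U : X → L} (hU : Q.IsDirClosed cl U) :
    Q.IsDirectedL (eD Q cl) (EU Q cl hgc hlc U) := by
  constructor
  · refine le_trans hU.1 (iSup_le fun x => ?_)
    exact le_trans (le_EU_Cx Q cl hgc hlc U x)
      (le_iSup (EU Q cl hgc hlc U) (Cx Q cl hgc hlc x))
  · intro V W
    rw [show EU Q cl hgc hlc U W = ⨆ y, if W = Cx Q cl hgc hlc y then U y else ⊥ from rfl,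
      Q.mul_iSup']
    refine iSup_le fun y => ?_
    rw [Q.mul_comm,
      show EU Q cl hgc hlc U V = ⨆ x, if V = Cx Q cl hgc hlc x then U x else ⊥ from rfl,
      Q.mul_iSup']
    refine iSup_le fun x => ?_
    by_cases hV : V = Cx Q cl hgc hlc x
    · by_cases hW : W = Cx Q cl hgc hlc y
      · subst hV; subst hW
        rw [if_pos rfl, if_pos rfl]
        -- goal: mul (ite_W = U y applied?) order: mul (if ...) (if ...) : first factor is y-term
        -- current goal: Q.mul (U y) (U x) ≤ ⨆ Z, ...
        rw [Q.mul_comm]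
        refine le_trans (hU.2.2.2 x y) ?_
        refine iSup_le fun z => ?_
        refine le_trans (Q.mul_le_mul' (Q.mul_le_mul'
          (le_EU_Cx Q cl hgc hlc U z) (cl_ux_le_subL Q cl hgc z x))
          (cl_ux_le_subL Q cl hgc z y)) ?_
        exact le_iSup (fun Z => Q.mul (Q.mul (EU Q cl hgc hlc U Z)
          (eD Q cl (Cx Q cl hgc hlc x) Z)) (eD Q cl (Cx Q cl hgc hlc y) Z))
          (Cx Q cl hgc hlc z)
      · rw [if_neg hW, Q.bot_mul']; exact bot_le
    · rw [if_neg hV, Q.mul_bot']; exact bot_le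

theorem isSupL_kfun (hgc : Q.IsGenClosure cl) (hlc : ∀ A : X → L, A ≤ cl A)
    (U : DCset Q cl) :
    Q.IsSupL (eD Q cl) (Q.kfun (eD Q cl) U) U := by
  intro y
  apply le_antisymm
  · refine le_iInf fun W => ?_
    rw [Q.le_res_iff']
    show Q.mul _ (Q.kfun (eD Q cl) U W) ≤ _
    rw [CommQuantale.kfun]
    by_cases h : Q.unit ≤ Q.wayBelow (eD Q cl) W W
    · rw [if_pos h, Q.mul_comm]
      exact Q.subL_trans' W.1 U.1 y.1
    · rw [if_neg h, Q.mul_bot']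
      exact bot_le
  · show (⨅ W, Q.res (Q.kfun (eD Q cl) U W) (eD Q cl W y))
        ≤ ⨅ t, Q.res (U.1 t) (y.1 t)
    refine le_iInf fun t => ?_
    refine le_trans (iInf_le _ (Cx Q cl hgc hlc t)) ?_
    rw [CommQuantale.kfun, if_pos (compact_Cx Q cl hgc hlc t)]
    refine le_trans (Q.res_anti_left' (U.2.2.1 t) _) (Q.res_mono_right' _ ?_)
    exact subL_cl_ux_le Q cl hlc y.1 t

theorem kfun_directed (hgc : Q.IsGenClosure cl) (hlc : ∀ A : X → L, A ≤ cl A)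
    (U : DCset Q cl) :
    Q.IsDirectedL (eD Q cl) (Q.kfun (eD Q cl) U) := by
  have hsup : Q.IsSupL (eD Q cl) (EU Q cl hgc hlc U.1) U :=
    isSupL_SU Q cl (EU Q cl hgc hlc U.1) U (SU_EU Q cl hgc hlc U.2).symm
  have hdir := EU_directed Q cl hgc hlc U.2
  have hkey : ∀ V : DCset Q cl, Q.unit ≤ Q.wayBelow (eD Q cl) V V →
      eD Q cl V U ≤ ⨆ x, Q.mul (U.1 x) (eD Q cl V (Cx Q cl hgc hlc x)) := by
    intro V hV
    have h1 : Q.unit ≤ Q.res (eD Q cl V U)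
        (⨆ d, Q.mul (EU Q cl hgc hlc U.1 d) (eD Q cl V d)) := by
      refine le_trans hV ?_
      simp only [CommQuantale.wayBelow]
      exact iInf_le_of_le (EU Q cl hgc hlc U.1) (iInf_le_of_le hdir
        (iInf_le_of_le U (iInf_le _ hsup)))
    rw [Q.le_res_iff', Q.unit_mul'] at h1
    refine le_trans h1 ?_
    rw [EU_mul_iSup Q cl hgc hlc U.1 (fun d => eD Q cl V d)]
  constructor
  · refine le_trans U.2.1 (iSup_le fun x => ?_)
    refine le_trans ?_ (le_iSup (Q.kfun (eD Q cl) U) (Cx Q cl hgc hlc x))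
    show U.1 x ≤ Q.kfun (eD Q cl) U (Cx Q cl hgc hlc x)
    rw [CommQuantale.kfun, if_pos (compact_Cx Q cl hgc hlc x)]
    exact U.2.2.1 x
  · intro V W
    by_cases hV : Q.unit ≤ Q.wayBelow (eD Q cl) V V
    · by_cases hW : Q.unit ≤ Q.wayBelow (eD Q cl) W W
      · have hkV : Q.kfun (eD Q cl) U V = eD Q cl V U := by
          rw [CommQuantale.kfun, if_pos hV]
        have hkW : Q.kfun (eD Q cl) U W = eD Q cl W U := by
          rw [CommQuantale.kfun, if_pos hW]
        rw [hkV, hkW]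
        refine le_trans (Q.mul_le_mul' (hkey V hV) (hkey W hW)) ?_
        rw [Q.mul_iSup']
        refine iSup_le fun y => ?_
        rw [Q.mul_comm, Q.mul_iSup']
        refine iSup_le fun x => ?_
        have e1 : Q.mul (Q.mul (U.1 y) (eD Q cl W (Cx Q cl hgc hlc y)))
            (Q.mul (U.1 x) (eD Q cl V (Cx Q cl hgc hlc x)))
            = Q.mul (Q.mul (U.1 x) (U.1 y))
              (Q.mul (eD Q cl V (Cx Q cl hgc hlc x))
                (eD Q cl W (Cx Q cl hgc hlc y))) := by ac_rfl
        rw [e1]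
        refine le_trans (Q.mul_le_mul' (U.2.2.2.2 x y) le_rfl) ?_
        rw [Q.mul_comm, Q.mul_iSup']
        refine iSup_le fun z => ?_
        have e2 : Q.mul (Q.mul (eD Q cl V (Cx Q cl hgc hlc x))
              (eD Q cl W (Cx Q cl hgc hlc y)))
            (Q.mul (Q.mul (U.1 z) (cl (Q.ux z) x)) (cl (Q.ux z) y))
            = Q.mul (Q.mul (U.1 z)
                (Q.mul (eD Q cl V (Cx Q cl hgc hlc x)) (cl (Q.ux z) x)))
              (Q.mul (eD Q cl W (Cx Q cl hgc hlc y)) (cl (Q.ux z) y)) := by ac_rfl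
        rw [e2]
        have i1 : Q.mul (eD Q cl V (Cx Q cl hgc hlc x)) (cl (Q.ux z) x)
            ≤ eD Q cl V (Cx Q cl hgc hlc z) := by
          refine le_trans (Q.mul_le_mul_right' _ (cl_ux_le_subL Q cl hgc z x)) ?_
          exact Q.subL_trans' V.1 (cl (Q.ux x)) (cl (Q.ux z))
        have i2 : Q.mul (eD Q cl W (Cx Q cl hgc hlc y)) (cl (Q.ux z) y)
            ≤ eD Q cl W (Cx Q cl hgc hlc z) := by
          refine le_trans (Q.mul_le_mul_right' _ (cl_ux_le_subL Q cl hgc z y)) ?_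
          exact Q.subL_trans' W.1 (cl (Q.ux y)) (cl (Q.ux z))
        have i3 : U.1 z ≤ Q.kfun (eD Q cl) U (Cx Q cl hgc hlc z) := by
          rw [CommQuantale.kfun, if_pos (compact_Cx Q cl hgc hlc z)]
          exact U.2.2.1 z
        refine le_trans (Q.mul_le_mul' (Q.mul_le_mul' i3 i1) i2) ?_
        exact le_iSup (fun Z => Q.mul (Q.mul (Q.kfun (eD Q cl) U Z) (eD Q cl V Z))
          (eD Q cl W Z)) (Cx Q cl hgc hlc z)
      · rw [show Q.kfun (eD Q cl) U W = (⊥ : L) by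
          rw [CommQuantale.kfun, if_neg hW], Q.mul_bot']
        exact bot_le
    · rw [show Q.kfun (eD Q cl) U V = (⊥ : L) by
        rw [CommQuantale.kfun, if_neg hV], Q.bot_mul']
      exact bot_le

theorem lorderD : Q.IsLOrder (eD Q cl) :=
  ⟨fun U => Q.unit_le_subL_self' U.1,
   fun U V W => Q.subL_trans' U.1 V.1 W.1,
   fun U V h1 h2 => Subtype.ext (funext fun t =>
     le_antisymm (Q.unit_le_subL_iff'.1 h1 t) (Q.unit_le_subL_iff'.1 h2 t))⟩

end Stmt13Aux

end CommQuantale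

open CommQuantale in
/-- For an L-closure space X, the L-ordered set (𝔠(X), sub) is an
algebraic L-dcpo. -/
theorem stmt13 {L X : Type u} [CompleteLattice L] (Q : CommQuantale L)
    (cl : (X → L) → (X → L)) (hgc : Q.IsGenClosure cl)
    (hlc : ∀ A : X → L, A ≤ cl A) :
    Q.IsAlgebraicLDcpo
      (fun U V : {U : X → L // Q.IsDirClosed cl U} => Q.subL U.1 V.1) := by
  exact ⟨lorderD Q cl, dcpoL Q cl,
    fun U => ⟨kfun_directed Q cl hgc hlc U, isSupL_kfun Q cl hgc hlc U⟩⟩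
end
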